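/- In the hyperbolic metric d(c, c') = arcosh(c · c') on the hyperboloid, suppose c₁ and c₂ are points with d(c₁, c₂) ≤ ε, and ℓ, w are points satisfying d(c₁, ℓ) ≤ d(c₁, w) and d(c₂, w) ≤ d(c₂, ℓ). Then 1 - (c₁ · ℓ)/(c₁ · w) ≤ 2ε, where x · y = cosh(d(x,y)). -/

import Mathlib

open Real

lemma cosh_sub_cosh_le (a b : ℝ) (ha : 0 ≤ a) (hab : a ≤ b) :
    Real.cosh b - Real.cosh a ≤ (b - a) * Real.cosh b := by
  set f : ℝ → ℝ := fun x => Real.cosh x + (b - x) * Real.cosh b with hf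
  have key : AntitoneOn f (Set.Icc a b) := by
    apply antitoneOn_of_deriv_nonpos (convex_Icc a b)
    · exact (Real.continuous_cosh.add ((continuous_const.sub continuous_id).mul
        continuous_const)).continuousOn
    · intro x hx
      exact ((Real.differentiable_cosh x).add
        ((((differentiable_const b).sub differentiable_id).mul
          (differentiable_const _)) x)).differentiableWithinAt
    · intro x hx
      rw [interior_Icc] at hx
      have hd : deriv f x = Real.sinh x - Real.cosh b := by
        have : HasDerivAt f (Real.sinh x + (0 - 1) * Real.cosh b) x :=
          (Real.hasDerivAt_cosh x).add
            (((hasDerivAt_const x b).sub (hasDerivAt_id x)).mul_const _)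
        rw [this.deriv]; ring
      rw [hd, sub_nonpos]
      have h1 : Real.sinh x ≤ Real.cosh x := by
        rw [Real.cosh_eq, Real.sinh_eq]
        have := Real.exp_pos (-x)
        linarith
      have h2 : Real.cosh x ≤ Real.cosh b := by
        rw [Real.cosh_le_cosh]
        rw [abs_of_nonneg (le_trans ha hx.1.le), abs_of_nonneg (le_trans ha (le_trans hx.1.le hx.2.le))]
        exact hx.2.le
      linarith
  have := key (Set.left_mem_Icc.2 hab) (Set.right_mem_Icc.2 hab) hab
  simp only [hf] at this
  nlinarith

theorem stmt9 (H : Type*) [MetricSpace H] (l w c₁ c₂ : H) (ε : ℝ)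
    (pairing : H → H → ℝ)
    (hpair : ∀ x y : H, pairing x y = Real.cosh (dist x y))
    (h12 : dist c₁ c₂ ≤ ε)
    (h1 : dist c₁ l ≤ dist c₁ w)
    (h2 : dist c₂ w ≤ dist c₂ l) :
    1 - pairing c₁ l / pairing c₁ w ≤ 2 * ε := by
  rw [hpair, hpair]
  set a := dist c₁ l with haa
  set b := dist c₁ w with hbb
  have hba : b - a ≤ 2 * ε := by
    have t1 : b ≤ dist c₁ c₂ + dist c₂ w := dist_triangle _ _ _
    have t2 : dist c₂ l ≤ dist c₂ c₁ + a := dist_triangle _ _ _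
    have t3 : dist c₂ c₁ = dist c₁ c₂ := dist_comm _ _
    linarith
  have hcb : (1:ℝ) ≤ Real.cosh b := Real.one_le_cosh b
  have hkey := cosh_sub_cosh_le a b dist_nonneg h1
  have hdiv : 1 - 2 * ε ≤ Real.cosh a / Real.cosh b :=
    (le_div_iff₀ (by linarith)).2 (by nlinarith)
  linarith
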